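/- Let (x₁, y₁, z₁) and (x₂, y₂, z₂) be orthonormal frames in ℝ³, let r ∈ ℝ³ with r ≠ 0, write u = r/|r|, let σ ∈ {−1, +1}, and let η, μ > 0 be real constants with μ > η/2. Define F(r, x₂, y₂, x₁) = σ·η·(u·x₂)(u·y₂) + μ·(x₁·y₂) (and correspondingly with z in place of y, and with (−r, x₁, ·, x₂) in place of (r, x₂, ·, x₁)). Then (x₁·y₂)·F(r,x₂,y₂,x₁) + (x₂·y₁)·F(−r,x₁,y₁,x₂) + (x₁·z₂)·F(r,x₂,z₂,x₁) + (x₂·z₁)·F(−r,x₁,z₁,x₂) ≥ 0. -/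

import Mathlib

open RealInnerProductSpace

/-- An orthonormal frame in ℝ³: an ordered triple of pairwise orthogonal unit vectors. -/
def IsONFrame (x y z : EuclideanSpace ℝ (Fin 3)) : Prop :=
  ‖x‖ = 1 ∧ ‖y‖ = 1 ∧ ‖z‖ = 1 ∧ ⟪x, y⟫ = 0 ∧ ⟪x, z⟫ = 0 ∧ ⟪y, z⟫ = 0

/-- The rectilinear interaction term
`F(r, x₂, y₂, x₁) = σ η (r/|r| · x₂)(r/|r| · y₂) + μ (x₁ · y₂)`. -/
noncomputable def Frect (σ η μ : ℝ) (r x₂ y₂ x₁ : EuclideanSpace ℝ (Fin 3)) : ℝ :=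
  σ * η * (⟪‖r‖⁻¹ • r, x₂⟫ * ⟪‖r‖⁻¹ • r, y₂⟫) + μ * ⟪x₁, y₂⟫

lemma frame_parseval (x y z : EuclideanSpace ℝ (Fin 3)) (h : IsONFrame x y z)
    (v w : EuclideanSpace ℝ (Fin 3)) :
    ⟪v, w⟫ = ⟪v, x⟫ * ⟪x, w⟫ + ⟪v, y⟫ * ⟪y, w⟫ + ⟪v, z⟫ * ⟪z, w⟫ := by
  obtain ⟨hx, hy, hz, hxy, hxz, hyz⟩ := h
  have hxx : ⟪x, x⟫ = 1 := by rw [real_inner_self_eq_norm_sq, hx]; norm_num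
  have hyy : ⟪y, y⟫ = 1 := by rw [real_inner_self_eq_norm_sq, hy]; norm_num
  have hzz : ⟪z, z⟫ = 1 := by rw [real_inner_self_eq_norm_sq, hz]; norm_num
  have hyx : ⟪y, x⟫ = 0 := by rw [real_inner_comm]; exact hxy
  have hzx : ⟪z, x⟫ = 0 := by rw [real_inner_comm]; exact hxz
  have hzy : ⟪z, y⟫ = 0 := by rw [real_inner_comm]; exact hyz
  have horth : Orthonormal ℝ ![x, y, z] := by
    rw [orthonormal_iff_ite]
    intro i j
    fin_cases i <;> fin_cases j <;>
      norm_num <;>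
      first | exact hxx | exact hyy | exact hzz | exact hxy | exact hxz | exact hyz
            | exact hyx | exact hzx | exact hzy | exact Or.inl hx | exact Or.inl hy
            | exact Or.inl hz
  have hcard : Fintype.card (Fin 3) = Module.finrank ℝ (EuclideanSpace ℝ (Fin 3)) := by
    simp [finrank_euclideanSpace]
  let b : OrthonormalBasis (Fin 3) ℝ (EuclideanSpace ℝ (Fin 3)) :=
    (basisOfLinearIndependentOfCardEqFinrank horth.linearIndependent hcard).toOrthonormalBasis
      (by rwa [coe_basisOfLinearIndependentOfCardEqFinrank])
  have hb : ∀ i, b i = ![x, y, z] i := by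
    intro i
    simp only [b, Module.Basis.coe_toOrthonormalBasis, coe_basisOfLinearIndependentOfCardEqFinrank]
  have := b.sum_inner_mul_inner v w
  rw [Fin.sum_univ_three, hb 0, hb 1, hb 2] at this
  simpa using this.symm

/-- Gram determinant nonnegativity for three unit vectors. -/
lemma gram_nonneg (u v w : EuclideanSpace ℝ (Fin 3))
    (huu : ⟪u, u⟫ = 1) (hvv : ⟪v, v⟫ = 1) (hww : ⟪w, w⟫ = 1) :
    1 + 2 * ⟪u, v⟫ * ⟪u, w⟫ * ⟪v, w⟫ - ⟪u, v⟫ * ⟪u, v⟫ - ⟪u, w⟫ * ⟪u, w⟫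
      - ⟪v, w⟫ * ⟪v, w⟫ ≥ 0 := by
  have hcs := real_inner_mul_inner_self_le (v - ⟪u, v⟫ • u) (w - ⟪u, w⟫ • u)
  have e1 : ⟪v - ⟪u, v⟫ • u, w - ⟪u, w⟫ • u⟫ = ⟪v, w⟫ - ⟪u, v⟫ * ⟪u, w⟫ := by
    simp only [inner_sub_left, inner_sub_right, real_inner_smul_left, real_inner_smul_right,
      huu, real_inner_comm u v, real_inner_comm u w]
    ring
  have e2 : ⟪v - ⟪u, v⟫ • u, v - ⟪u, v⟫ • u⟫ = 1 - ⟪u, v⟫ * ⟪u, v⟫ := by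
    simp only [inner_sub_left, inner_sub_right, real_inner_smul_left, real_inner_smul_right,
      huu, hvv, real_inner_comm u v]
    ring
  have e3 : ⟪w - ⟪u, w⟫ • u, w - ⟪u, w⟫ • u⟫ = 1 - ⟪u, w⟫ * ⟪u, w⟫ := by
    simp only [inner_sub_left, inner_sub_right, real_inner_smul_left, real_inner_smul_right,
      huu, hww, real_inner_comm u w]
    ring
  rw [e1, e2, e3] at hcs
  nlinarith [hcs]

lemma scalar_key (σ η μ k A B C D p q s a b c : ℝ)
    (hσ : σ = -1 ∨ σ = 1) (hη : 0 < η) (hμ : η / 2 < μ)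
    (F1 : k*k + A*A + C*C = 1)
    (F4 : k*k + B*B + D*D = 1)
    (F2 : a = p*k + q*A + s*C)
    (F5 : p = a*k + b*B + c*D)
    (hg : 1 + 2*a*p*k - a*a - p*p - k*k ≥ 0) :
    A*(σ*η*(p*q)+μ*A) + B*(σ*η*(a*b)+μ*B) + C*(σ*η*(p*s)+μ*C) + D*(σ*η*(a*c)+μ*D) ≥ 0 := by
  have hk2 : k*k ≤ 1 := by nlinarith [sq_nonneg A, sq_nonneg C]
  have hk1 : 0 ≤ 1 - k := by nlinarith
  have hk1' : 0 ≤ 1 + k := by nlinarith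
  have hknn : 0 ≤ 1 - k*k := by linarith
  set S : ℝ := 2*p*a - k*(p*p + a*a) with hS
  have hS1 : (1 - k*k) + S ≥ 0 := by
    nlinarith [mul_nonneg hk1 (sq_nonneg (p + a))]
  have hS2 : (1 - k*k) - S ≥ 0 := by
    nlinarith [mul_nonneg hk1' (sq_nonneg (p - a))]
  have hQ : q*A + s*C = a - p*k := by linarith
  have hP : b*B + c*D = p - a*k := by linarith
  have hsum : p*q*A + a*b*B + p*s*C + a*c*D = S := by
    calc p*q*A + a*b*B + p*s*C + a*c*D
        = p*(q*A + s*C) + a*(b*B + c*D) := by ring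
      _ = p*(a - p*k) + a*(p - a*k) := by rw [hQ, hP]
      _ = S := by rw [hS]; ring
  have hmu : A*A + B*B + C*C + D*D = 2 - 2*(k*k) := by linarith
  have hgoal : A*(σ*η*(p*q)+μ*A) + B*(σ*η*(a*b)+μ*B) + C*(σ*η*(p*s)+μ*C) + D*(σ*η*(a*c)+μ*D)
      = σ*η*S + μ*(2 - 2*(k*k)) := by
    rw [← hsum, ← hmu]; ring
  rw [hgoal]
  have h1 : 0 ≤ η * ((1 - k*k) + S) := mul_nonneg hη.le hS1
  have h2 : 0 ≤ η * ((1 - k*k) - S) := mul_nonneg hη.le hS2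
  have h3 : 0 ≤ (2*μ - η) * (1 - k*k) := mul_nonneg (by linarith) hknn
  rcases hσ with h | h <;> subst h <;> nlinarith

theorem stmt11 (x₁ y₁ z₁ x₂ y₂ z₂ : EuclideanSpace ℝ (Fin 3))
    (h1 : IsONFrame x₁ y₁ z₁) (h2 : IsONFrame x₂ y₂ z₂)
    (r : EuclideanSpace ℝ (Fin 3)) (hr : r ≠ 0)
    (σ : ℝ) (hσ : σ = -1 ∨ σ = 1)
    (η μ : ℝ) (hη : 0 < η) (hμ0 : 0 < μ) (hμ : η / 2 < μ) :
    ⟪x₁, y₂⟫ * Frect σ η μ r x₂ y₂ x₁ +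
    ⟪x₂, y₁⟫ * Frect σ η μ (-r) x₁ y₁ x₂ +
    ⟪x₁, z₂⟫ * Frect σ η μ r x₂ z₂ x₁ +
    ⟪x₂, z₁⟫ * Frect σ η μ (-r) x₁ z₁ x₂ ≥ 0 := by
  have hrn : ‖r‖ ≠ 0 := norm_ne_zero_iff.mpr hr
  have hu : (‖r‖⁻¹ • r : EuclideanSpace ℝ (Fin 3)) = ‖r‖⁻¹ • r := rfl
  generalize hudef : (‖r‖⁻¹ • r : EuclideanSpace ℝ (Fin 3)) = u at *
  have hun : ‖u‖ = 1 := by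
    rw [← hudef, norm_smul, norm_inv, norm_norm, inv_mul_cancel₀ hrn]
  have huu : ⟪u, u⟫ = 1 := by rw [real_inner_self_eq_norm_sq, hun]; norm_num
  have hnr : ‖-r‖⁻¹ • (-r) = -u := by rw [norm_neg, smul_neg, hudef]
  have hx1 : ⟪x₁, x₁⟫ = 1 := by rw [real_inner_self_eq_norm_sq, h1.1]; norm_num
  have hx2 : ⟪x₂, x₂⟫ = 1 := by rw [real_inner_self_eq_norm_sq, h2.1]; norm_num
  have F1 : ⟪x₁, x₂⟫ * ⟪x₁, x₂⟫ + ⟪x₁, y₂⟫ * ⟪x₁, y₂⟫ + ⟪x₁, z₂⟫ * ⟪x₁, z₂⟫ = 1 := by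
    have h := frame_parseval x₂ y₂ z₂ h2 x₁ x₁
    rw [hx1, real_inner_comm x₁ x₂, real_inner_comm x₁ y₂, real_inner_comm x₁ z₂] at h
    linarith
  have F4 : ⟪x₁, x₂⟫ * ⟪x₁, x₂⟫ + ⟪x₂, y₁⟫ * ⟪x₂, y₁⟫ + ⟪x₂, z₁⟫ * ⟪x₂, z₁⟫ = 1 := by
    have h := frame_parseval x₁ y₁ z₁ h1 x₂ x₂
    rw [hx2, real_inner_comm x₂ x₁, real_inner_comm x₂ y₁, real_inner_comm x₂ z₁,
      real_inner_comm x₁ x₂] at h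
    linarith
  have F2 : ⟪u, x₁⟫ = ⟪u, x₂⟫ * ⟪x₁, x₂⟫ + ⟪u, y₂⟫ * ⟪x₁, y₂⟫ + ⟪u, z₂⟫ * ⟪x₁, z₂⟫ := by
    have h := frame_parseval x₂ y₂ z₂ h2 u x₁
    rw [real_inner_comm x₁ x₂, real_inner_comm x₁ y₂, real_inner_comm x₁ z₂] at h
    linarith
  have F5 : ⟪u, x₂⟫ = ⟪u, x₁⟫ * ⟪x₁, x₂⟫ + ⟪u, y₁⟫ * ⟪x₂, y₁⟫ + ⟪u, z₁⟫ * ⟪x₂, z₁⟫ := by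
    have h := frame_parseval x₁ y₁ z₁ h1 u x₂
    rw [real_inner_comm x₂ y₁, real_inner_comm x₂ z₁] at h
    linarith
  have hg := gram_nonneg u x₁ x₂ huu hx1 hx2
  have key := scalar_key σ η μ ⟪x₁, x₂⟫ ⟪x₁, y₂⟫ ⟪x₂, y₁⟫ ⟪x₁, z₂⟫ ⟪x₂, z₁⟫
    ⟪u, x₂⟫ ⟪u, y₂⟫ ⟪u, z₂⟫ ⟪u, x₁⟫ ⟪u, y₁⟫ ⟪u, z₁⟫ hσ hη hμ F1 F4
    (by linarith) (by linarith) (by nlinarith [hg])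
  simp only [Frect, hudef, hnr, inner_neg_left]
  nlinarith [key]
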